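/- Equality of the RM constant with its distinct-tuples variant: Let n ≥ 3, let X₁,…,X_{n+1} be Banach spaces, ϖ : X₁×⋯×X_{n+1} → ℂ an (n+1)-linear contraction, J ⊂ {1,…,n+1} with 1 ≤ #J ≤ n−2, v ∈ {1,…,n+1}∖J, and A ⊂ ∏_{j∈J} X_j. Let ‖A‖_{RM′_v(ϖ,J)} be defined exactly as ‖A‖_{RM_v(ϖ,J)} except that the tuples (e_{j,k})_{j∈J} ∈ A occurring in the supremum are required to be pairwise distinct in k. Then ‖A‖_{RM′_v(ϖ,J)} = ‖A‖_{RM_v(ϖ,J)}. -/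

import Mathlib

open MeasureTheory
open scoped ENNReal NNReal BigOperators Classical

noncomputable section

namespace OVM

/-! ### Points and cubes in `ℝ^d` -/

abbrev Pt (d : ℕ) := Fin d → ℝ

structure Cube (d : ℕ) where
  x : Fin d → ℝ
  s : ℝ
  pos : 0 < s

namespace Cube

variable {d : ℕ}

def set (Q : Cube d) : Set (Pt d) := {p | ∀ i, Q.x i ≤ p i ∧ p i < Q.x i + Q.s}

def vol (Q : Cube d) : ℝ := Q.s ^ d

def center (Q : Cube d) : Pt d := fun i => Q.x i + Q.s / 2

/-- The concentric dilate `CQ` with `C = 2√d + 1 ≥ 2√d`. -/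
def dil (Q : Cube d) : Cube d :=
  ⟨fun i => Q.x i + Q.s / 2 - (2 * Real.sqrt d + 1) * Q.s / 2,
   (2 * Real.sqrt d + 1) * Q.s, by
     have h1 : (0:ℝ) < 2 * Real.sqrt d + 1 := by positivity
     exact mul_pos h1 Q.pos⟩

end Cube

/-! ### Dyadic grids: `D_ω = {2^{-k}([0,1)^d + m) + ∑_{2^{-j} < 2^{-k}} ω_j 2^{-j}}` -/

def dyadicShiftVec {d : ℕ} (ω : ℤ → Fin d → Bool) (k : ℤ) : Pt d :=
  fun i => ∑' j : ℤ, if k < j ∧ ω j i = true then (2:ℝ) ^ (-j) else 0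

def dyadicCube {d : ℕ} (ω : ℤ → Fin d → Bool) (k : ℤ) (m : Fin d → ℤ) : Cube d :=
  ⟨fun i => (m i : ℝ) * (2:ℝ) ^ (-k) + dyadicShiftVec ω k i, (2:ℝ) ^ (-k), by positivity⟩

def dyadicGrid {d : ℕ} (ω : ℤ → Fin d → Bool) : Set (Cube d) :=
  {Q | ∃ k m, Q = dyadicCube ω k m}

def IsDyadicGrid {d : ℕ} (D : Set (Cube d)) : Prop := ∃ ω, D = dyadicGrid ω

def stdGrid (d : ℕ) : Set (Cube d) := dyadicGrid fun _ _ => false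

/-- `IsAncestor K Q k` means `Q^{(k)} = K`, i.e. `K` is the `k`-th dyadic ancestor of `Q`. -/
def IsAncestor {d : ℕ} (K Q : Cube d) (k : ℕ) : Prop :=
  Q.set ⊆ K.set ∧ K.s = 2 ^ k * Q.s

/-- `Q'` is a dyadic child of `Q`. -/
def IsChild {d : ℕ} (Q' Q : Cube d) : Prop := IsAncestor Q Q' 1

/-! ### Haar functions -/

def haar1 (a s : ℝ) (b : Bool) : ℝ → ℝ := fun t =>
  if b then
    (if a ≤ t ∧ t < a + s / 2 then (Real.sqrt s)⁻¹
     else if a + s / 2 ≤ t ∧ t < a + s then -(Real.sqrt s)⁻¹ else 0)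
  else if a ≤ t ∧ t < a + s then (Real.sqrt s)⁻¹ else 0

/-- The Haar function `h_Q^η` on the cube `Q`. -/
def haar {d : ℕ} (Q : Cube d) (η : Fin d → Bool) : Pt d → ℝ :=
  fun p => ∏ i, haar1 (Q.x i) Q.s (η i) (p i)

/-- A Haar parameter is cancellative iff it is not identically zero. -/
def cancel {d : ℕ} (η : Fin d → Bool) : Prop := ∃ i, η i = true

/-! ### basic function classes, averages, sparse collections -/

/-- bounded, compactly supported, strongly measurable (the class `L^∞_c`). -/
def BCS {d : ℕ} {X : Type*} [NormedAddCommGroup X] (f : Pt d → X) : Prop :=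
  StronglyMeasurable f ∧ (∃ M, ∀ x, ‖f x‖ ≤ M) ∧ HasCompactSupport f

/-- the average `⟨f⟩_Q`. -/
def cubeAvg {d : ℕ} {X : Type*} [NormedAddCommGroup X] [NormedSpace ℝ X]
    (Q : Cube d) (f : Pt d → X) : X :=
  Q.vol⁻¹ • ∫ y in Q.set, f y

/-- the average `⟨‖f‖_X⟩_Q`, as an extended real. -/
def avgNormE {d : ℕ} {X : Type*} [NormedAddCommGroup X] (Q : Cube d) (f : Pt d → X) : ℝ≥0∞ :=
  (∫⁻ y in Q.set, ENNReal.ofReal ‖f y‖) / ENNReal.ofReal Q.vol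

/-- `S` is an `η`-sparse collection of cubes of `D`. -/
def IsSparseIn {d : ℕ} (η : ℝ) (S D : Set (Cube d)) : Prop :=
  S ⊆ D ∧ ∃ E : Cube d → Set (Pt d),
    (∀ Q ∈ S, E Q ⊆ Q.set ∧ ENNReal.ofReal (η * Q.vol) < volume (E Q)) ∧
    S.PairwiseDisjoint E

/-- `L^p`-norm of an `ℝ≥0∞`-valued function (`0 < p < ∞`). -/
def lpNormE {d : ℕ} (F : Pt d → ℝ≥0∞) (p : ℝ) : ℝ≥0∞ := (∫⁻ x, F x ^ p) ^ p⁻¹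

/-- distance between two sets. -/
def setDist {α : Type*} [PseudoEMetricSpace α] (A B : Set α) : ℝ :=
  (⨅ (x ∈ A) (y ∈ B), edist x y).toReal

/-! ### randomized norms -/

/-- `‖(e_k)‖_{Rad(X)} = (E‖∑ ε_k e_k‖²)^{1/2}`. -/
def radNorm {X : Type*} [NormedAddCommGroup X] {K : ℕ} (e : Fin K → X) : ℝ :=
  Real.sqrt ((∑ ε : Fin K → Bool, ‖∑ k, if ε k then e k else -e k‖ ^ 2) / 2 ^ K)

/-- `‖(e_{l,m})‖_{Rad₂(X)}`, doubly indexed random sums. -/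
def rad2Norm {X : Type*} [NormedAddCommGroup X] {N M : ℕ} (e : Fin N → Fin M → X) : ℝ :=
  Real.sqrt ((∑ ε : Fin N → Fin M → Bool, ‖∑ l, ∑ m, if ε l m then e l m else -e l m‖ ^ 2) /
    2 ^ (N * M))

/-- `(E E'‖∑ ε_i ε'_j e_{i,j}‖²)^{1/2}`, two independent families of signs. -/
def radRad {X : Type*} [NormedAddCommGroup X] {N : ℕ} (e : Fin N → Fin N → X) : ℝ :=
  Real.sqrt ((∑ ε : Fin N → Bool, ∑ δ : Fin N → Bool,
      ‖∑ i, ∑ j, if ε i = δ j then e i j else -e i j‖ ^ 2) / 4 ^ N)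

/-- Pisier's property `(α)`. -/
def HasPisierAlpha (X : Type*) [NormedAddCommGroup X] [NormedSpace ℝ X] : Prop :=
  ∃ C : ℝ, ∀ (N : ℕ) (a : Fin N → Fin N → ℝ) (e : Fin N → Fin N → X),
    (∀ i j, |a i j| ≤ 1) → radRad (fun i j => a i j • e i j) ≤ C * radRad e

/-! ### multilinear contractions and RM constants -/

section RM

variable {n : ℕ} {Z : Fin (n + 1) → Type*} [∀ j, NormedAddCommGroup (Z j)]

/-- `ϖ` is an `(n+1)`-linear contraction. -/
def IsContraction [∀ j, NormedSpace ℂ (Z j)] (ϖ : (∀ j, Z j) → ℂ) : Prop :=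
  (∃ Λ : MultilinearMap ℂ Z ℂ, ⇑Λ = ϖ) ∧ ∀ e, ‖ϖ e‖ ≤ ∏ j, ‖e j‖

/-- The `RM_v(ϖ, J)` constant of a finite indexed family `{(e_{j,k})_{j∈J}}_{k=1}^K`:
the supremum of `|∑_k ϖ(e_{1,k},…,e_{n+1,k})|` over all completions of the family with a
fixed unit vector in the slot `v` and Rademacher-normalized sequences elsewhere. -/
def RMfam (ϖ : (∀ j, Z j) → ℂ) (J : Finset (Fin (n + 1))) (v : Fin (n + 1))
    {K : ℕ} (e : ∀ j ∈ J, Fin K → Z j) : ℝ≥0∞ :=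
  ⨆ (g : ∀ j, Fin K → Z j) (_ :
      (∀ j (hj : j ∈ J), g j = e j hj) ∧
      (∃ gv : Z v, (∀ k, g v k = gv) ∧ ‖gv‖ ≤ 1) ∧
      ∀ j, j ∉ J → j ≠ v → radNorm (g j) ≤ 1),
    ENNReal.ofReal ‖∑ k, ϖ fun j => g j k‖

/-- The `RM_v(ϖ, J)` constant of a set `A` of `J`-tuples. -/
def RMconst (ϖ : (∀ j, Z j) → ℂ) (J : Finset (Fin (n + 1))) (v : Fin (n + 1))
    (A : Set (∀ j ∈ J, Z j)) : ℝ≥0∞ :=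
  ⨆ (K : ℕ) (e : ∀ j ∈ J, Fin K → Z j)
    (_ : ∀ k : Fin K, (fun j hj => e j hj k) ∈ A), RMfam ϖ J v e

/-- The `RM'_v(ϖ, J)` constant: as `RMconst`, but with pairwise distinct tuples. -/
def RMconstDistinct (ϖ : (∀ j, Z j) → ℂ) (J : Finset (Fin (n + 1))) (v : Fin (n + 1))
    (A : Set (∀ j ∈ J, Z j)) : ℝ≥0∞ :=
  ⨆ (K : ℕ) (e : ∀ j ∈ J, Fin K → Z j)
    (_ : (∀ k : Fin K, (fun j hj => e j hj k) ∈ A) ∧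
         Function.Injective fun k : Fin K => (fun j hj => e j hj k : ∀ j ∈ J, Z j)),
    RMfam ϖ J v e

/-- The `RM_v(ϖ, J)` constant of a family indexed by `ℕ` (sup of its finite truncations). -/
def RMfamInf (ϖ : (∀ j, Z j) → ℂ) (J : Finset (Fin (n + 1))) (v : Fin (n + 1))
    (e : ∀ j ∈ J, ℕ → Z j) : ℝ≥0∞ :=
  ⨆ K : ℕ, RMfam ϖ J v fun j hj => fun k : Fin K => e j hj k

/-- The factor appearing in the `R_ϖ`-boundedness condition; for `J = ∅` (the case `n = 2`)
no RM factor appears. -/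
def RMfactor (ϖ : (∀ j, Z j) → ℂ) (J : Finset (Fin (n + 1))) (v : Fin (n + 1))
    {K : ℕ} (e : ∀ j ∈ J, Fin K → Z j) : ℝ≥0∞ :=
  if J = ∅ then 1 else RMfam ϖ J v e

/-! ### the Rademacher maximal function and the RMF property -/

variable [∀ j, NormedSpace ℂ (Z j)]

/-- The multilinear Rademacher maximal function `RM_{D,ϖ,J,v}[(f_j)_{j∈J}]`. -/
def RMmax {d : ℕ} (ϖ : (∀ j, Z j) → ℂ) (D : Set (Cube d)) (J : Finset (Fin (n + 1)))
    (v : Fin (n + 1)) (f : ∀ j ∈ J, Pt d → Z j) (x : Pt d) : ℝ≥0∞ :=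
  RMconst ϖ J v {a | ∃ Q ∈ D, x ∈ Q.set ∧ a = fun j hj => cubeAvg Q (f j hj)}

/-- The `RMF_ϖ` property of the tuple `(Z_1, …, Z_{n+1})` relative to the lattice `D`
and the exponents `p`. -/
def HasRMF {d : ℕ} (ϖ : (∀ j, Z j) → ℂ) (D : Set (Cube d)) (p : Fin (n + 1) → ℝ≥0∞) : Prop :=
  ∀ j₁ j₂ : Fin (n + 1), j₁ ≠ j₂ → ∃ v : Fin (n + 1), v ≠ j₁ ∧ v ≠ j₂ ∧
    ∀ J : Finset (Fin (n + 1)), J.Nonempty → (∀ j ∈ J, j ≠ j₁ ∧ j ≠ j₂ ∧ j ≠ v) →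
      ∃ C : ℝ≥0∞, C ≠ ⊤ ∧ ∀ f : ∀ j ∈ J, Pt d → Z j,
        lpNormE (RMmax ϖ D J v f) ((∑ j ∈ J, (p j)⁻¹)⁻¹).toReal ≤
          C * ∏ j ∈ J.attach, eLpNorm (f j.1 j.2) (p j.1) volume

end RM


/-- sign character on `ZMod 2`. -/
def sg (x : ZMod 2) : ℂ := if x = 0 then 1 else -1

lemma sg_zero : sg 0 = 1 := if_pos rfl

lemma sg_one : sg 1 = -1 := if_neg (by decide)

lemma sg_add (x y : ZMod 2) : sg (x + y) = sg x * sg y := by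
  rcases (by decide : ∀ z : ZMod 2, z = 0 ∨ z = 1) x with rfl | rfl <;> rcases (by decide : ∀ z : ZMod 2, z = 0 ∨ z = 1) y with rfl | rfl <;> simp [sg] <;> norm_num <;> decide

lemma norm_sg (x : ZMod 2) : ‖sg x‖ = 1 := by
  rcases (by decide : ∀ z : ZMod 2, z = 0 ∨ z = 1) x with rfl | rfl <;> simp [sg]

lemma sg_sum {ι : Type*} (s : Finset ι) (f : ι → ZMod 2) :
    sg (∑ j ∈ s, f j) = ∏ j ∈ s, sg (f j) := by
  classical
  induction s using Finset.induction_on with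
  | empty => simp [sg_zero]
  | insert _ _ h ih => rw [Finset.sum_insert h, Finset.prod_insert h, sg_add, ih]

lemma zmod2_add_self (x : ZMod 2) : x + x = 0 := CharTwo.add_self_eq_zero x

/-- coordinate-pair sum of the sign character. -/
lemma sum_sg_pair {K : ℕ} (a b : Fin K) :
    ∑ τ : Fin K → ZMod 2, sg (τ a + τ b) = if a = b then ((2 : ℂ) ^ K) else 0 := by
  rcases eq_or_ne a b with rfl | hab
  · simp only [if_pos rfl, zmod2_add_self, sg_zero]
    rw [Finset.sum_const, Finset.card_univ, Fintype.card_fun, ZMod.card, Fintype.card_fin]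
    simp
  · rw [if_neg hab]
    set d : (Fin K → ZMod 2) := Pi.single a 1 with hd
    have hbij : Function.Bijective (fun τ : Fin K → ZMod 2 => τ + d) :=
      (Equiv.addRight d).bijective
    have h1 : ∑ τ : Fin K → ZMod 2, sg ((τ + d) a + (τ + d) b)
        = ∑ τ : Fin K → ZMod 2, sg (τ a + τ b) :=
      Fintype.sum_bijective _ hbij _ _ (fun τ => rfl)
    have h2 : ∀ τ : Fin K → ZMod 2,
        sg ((τ + d) a + (τ + d) b) = - sg (τ a + τ b) := by
      intro τ
      have ha : (τ + d) a = τ a + 1 := by simp [hd]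
      have hb : (τ + d) b = τ b := by
        simp [hd, Pi.single_eq_of_ne (Ne.symm hab)]
      rw [ha, hb, show τ a + 1 + τ b = (τ a + τ b) + 1 by ring, sg_add, sg_one]
      ring
    rw [Finset.sum_congr rfl (fun τ _ => h2 τ), Finset.sum_neg_distrib] at h1
    have h4 : (2 : ℂ) * ∑ τ : Fin K → ZMod 2, sg (τ a + τ b) = 0 := by
      linear_combination - h1
    exact (mul_eq_zero.mp h4).resolve_left two_ne_zero

lemma sum_pi_prod {ι : Type*} [Fintype ι] [DecidableEq ι] {β : Type*} [Fintype β]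
    {R : Type*} [CommSemiring R] (f : ι → β → R) :
    ∑ σ : ι → β, ∏ j, f j (σ j) = ∏ j, ∑ τ : β, f j τ := by
  rw [Finset.prod_univ_sum, Fintype.piFinset_univ]

/-- marginal sum over one coordinate of a product space. -/
lemma sum_pi_marginal {ι : Type*} [Fintype ι] [DecidableEq ι] {β : Type*} [Fintype β]
    {R : Type*} [CommSemiring R] (j₀ : ι) (φ : β → R) :
    ∑ σ : ι → β, φ (σ j₀) = (Fintype.card β : R) ^ (Fintype.card ι - 1) * ∑ τ : β, φ τ := by
  have h : ∀ σ : ι → β, φ (σ j₀) = ∏ j, (if j = j₀ then φ (σ j) else 1) := by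
    intro σ; rw [Finset.prod_ite_eq' Finset.univ j₀ (fun j => φ (σ j))]
    simp
  rw [Finset.sum_congr rfl (fun σ _ => h σ),
    sum_pi_prod (f := fun j τ => if j = j₀ then φ τ else 1)]
  have h2 : ∀ j : ι, (∑ τ : β, if j = j₀ then φ τ else 1)
      = if j = j₀ then ∑ τ : β, φ τ else (Fintype.card β : R) := by
    intro j
    by_cases hj : j = j₀ <;> simp [hj]
  rw [Finset.prod_congr rfl (fun j _ => h2 j), ← Finset.mul_prod_erase _ _ (Finset.mem_univ j₀)]
  simp only [if_pos rfl]
  rw [Finset.prod_congr rfl (fun j hj => if_neg (Finset.ne_of_mem_erase hj)),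
    Finset.prod_const, Finset.card_erase_of_mem (Finset.mem_univ j₀), Finset.card_univ]
  simp [mul_comm]


section RadNorm
variable {X : Type*} [NormedAddCommGroup X] [NormedSpace ℂ X]

lemma radNorm_nonneg {K : ℕ} (e : Fin K → X) : 0 ≤ radNorm e := Real.sqrt_nonneg _

lemma radNorm_sq {K : ℕ} (e : Fin K → X) :
    radNorm e ^ 2 = (∑ ε : Fin K → Bool, ‖∑ k, if ε k then e k else -e k‖ ^ 2) / 2 ^ K := by
  rw [radNorm, Real.sq_sqrt (by positivity)]

lemma radNorm_smul {K : ℕ} (c : ℂ) (e : Fin K → X) :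
    radNorm (fun k => c • e k) = ‖c‖ * radNorm e := by
  have h : ∀ ε : Fin K → Bool,
      ‖∑ k, if ε k then c • e k else -(c • e k)‖ ^ 2
        = ‖c‖ ^ 2 * ‖∑ k, if ε k then e k else -e k‖ ^ 2 := by
    intro ε
    have : ∀ k, (if ε k then c • e k else -(c • e k)) = c • (if ε k then e k else -e k) := by
      intro k; by_cases h : ε k <;> simp [h]
    rw [Finset.sum_congr rfl (fun k _ => this k), ← Finset.smul_sum, norm_smul, mul_pow]
  rw [radNorm, radNorm]
  simp only [h]
  rw [← Finset.mul_sum, mul_div_assoc, Real.sqrt_mul (sq_nonneg _),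
    Real.sqrt_sq (norm_nonneg c)]

lemma eq_zero_of_radNorm_eq_zero {K : ℕ} {e : Fin K → X} (h : radNorm e = 0) :
    ∀ k, e k = 0 := by
  intro k
  have h0 : (∑ ε : Fin K → Bool, ‖∑ k, if ε k then e k else -e k‖ ^ 2) / 2 ^ K = 0 := by
    have hle := Real.sqrt_eq_zero'.mp h
    have hge : (0:ℝ) ≤ (∑ ε : Fin K → Bool, ‖∑ k, if ε k then e k else -e k‖ ^ 2) / 2 ^ K := by
      positivity
    linarith
  have hsum : (∑ ε : Fin K → Bool, ‖∑ k, if ε k then e k else -e k‖ ^ 2) = 0 := by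
    field_simp at h0
    simpa using h0
  have hS : ∀ ε : Fin K → Bool, (∑ j, if ε j then e j else -e j) = 0 := by
    intro ε
    have := (Finset.sum_eq_zero_iff_of_nonneg
      (fun ε _ => sq_nonneg ‖∑ k, if ε k then e k else -e k‖)).mp hsum ε (Finset.mem_univ _)
    have hn : ‖∑ j, if ε j then e j else -e j‖ = 0 := by
      nlinarith [norm_nonneg (∑ j, if ε j then e j else -e j)]
    exact norm_eq_zero.mp hn
  have h1 := hS (fun _ => true)
  have h2 := hS (fun j => decide (j ≠ k))
  simp only [decide_eq_true_eq] at h1 h2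
  have h1' : (∑ j, e j) = 0 := by simpa using h1
  have h4 : ∑ j, (e j - (if j ≠ k then e j else -e j)) = 0 := by
    rw [Finset.sum_sub_distrib, h1', h2, sub_zero]
  have h5 : ∑ j, (e j - (if j ≠ k then e j else -e j)) = e k + e k := by
    rw [Finset.sum_eq_single k]
    · simp [sub_neg_eq_add]
    · intro j _ hj; simp [if_pos hj]
    · intro hk; exact absurd (Finset.mem_univ k) hk
  have h6 : (2:ℂ) • e k = 0 := by
    rw [two_smul]; rw [h5] at h4; exact h4
  have := smul_eq_zero.mp h6
  simpa using this

/-- Bool signs as complex scalars. -/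
def bb (b : Bool) : ℂ := if b then 1 else -1

lemma ite_eq_bb_smul {b : Bool} (x : X) : (if b then x else -x) = bb b • x := by
  cases b <;> simp [bb]

/-- An equivalence of `Bool` with `ZMod 2` matching `bb` with `sg`. -/
def eBool : Bool ≃ ZMod 2 where
  toFun := fun b => if b then 0 else 1
  invFun := fun x => x = 0
  left_inv := by intro b; cases b <;> simp
  right_inv := by intro x; rcases (by decide : ∀ z : ZMod 2, z = 0 ∨ z = 1) x with rfl | rfl <;> simp

lemma sg_eBool (b : Bool) : sg (eBool b) = bb b := by
  cases b <;> simp [eBool, sg, bb]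

/-- key distributional identity: random signs constant on fibers of `c`,
multiplied by fresh signs indexed by the fibers, have the distribution of
plain random signs. -/
def ddAux {K L : ℕ} (c : Fin K → Fin L) (ε : Fin L → Bool) : Fin K → ZMod 2 :=
  fun k => if ε (c k) then 0 else 1

lemma sum_radNorm_shift_sq {K L : ℕ} (c : Fin K → Fin L) (g : Fin K → X) :
    ∑ τ : Fin K → ZMod 2,
      radNorm (fun l => ∑ k ∈ Finset.univ.filter (fun k => c k = l), sg (τ k) • g k) ^ 2
      = 2 ^ K * radNorm g ^ 2 := by
  have key : ∀ (τ : Fin K → ZMod 2) (ε : Fin L → Bool),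
      (∑ l, if ε l then (∑ k ∈ Finset.univ.filter (fun k => c k = l), sg (τ k) • g k)
            else -(∑ k ∈ Finset.univ.filter (fun k => c k = l), sg (τ k) • g k))
      = ∑ k, sg ((τ + ddAux c ε) k) • g k := by
    intro τ ε
    have step1 : ∀ l, (if ε l then (∑ k ∈ Finset.univ.filter (fun k => c k = l), sg (τ k) • g k)
            else -(∑ k ∈ Finset.univ.filter (fun k => c k = l), sg (τ k) • g k))
        = ∑ k ∈ Finset.univ.filter (fun k => c k = l),
            sg ((τ + ddAux c ε) k) • g k := by
      intro l
      rw [ite_eq_bb_smul, Finset.smul_sum]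
      refine Finset.sum_congr rfl (fun k hk => ?_)
      have hck : c k = l := (Finset.mem_filter.mp hk).2
      rw [smul_smul]
      congr 1
      have : (τ + ddAux c ε) k = τ k + (if ε l then 0 else 1) := by
        simp [ddAux, hck]
      rw [this, sg_add]
      by_cases hε : ε l <;> simp [hε, sg_zero, sg_one, bb, mul_comm]
    rw [Finset.sum_congr rfl (fun l _ => step1 l)]
    exact Finset.sum_fiberwise _ _ _
  have main : ∀ ε : Fin L → Bool,
      ∑ τ : Fin K → ZMod 2,
        ‖∑ l, if ε l then (∑ k ∈ Finset.univ.filter (fun k => c k = l), sg (τ k) • g k)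
            else -(∑ k ∈ Finset.univ.filter (fun k => c k = l), sg (τ k) • g k)‖ ^ 2
      = ∑ τ : Fin K → ZMod 2, ‖∑ k, sg (τ k) • g k‖ ^ 2 := by
    intro ε
    rw [Finset.sum_congr rfl (fun τ _ => by rw [key τ ε])]
    exact Fintype.sum_bijective (fun τ => τ + ddAux c ε)
      (Equiv.addRight (ddAux c ε)).bijective _ _ (fun τ => rfl)
  have swap : ∑ τ : Fin K → ZMod 2,
        radNorm (fun l => ∑ k ∈ Finset.univ.filter (fun k => c k = l), sg (τ k) • g k) ^ 2
      = (∑ ε : Fin L → Bool, ∑ τ : Fin K → ZMod 2,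
        ‖∑ l, if ε l then (∑ k ∈ Finset.univ.filter (fun k => c k = l), sg (τ k) • g k)
            else -(∑ k ∈ Finset.univ.filter (fun k => c k = l), sg (τ k) • g k)‖ ^ 2) / 2 ^ L := by
    rw [Finset.sum_congr rfl (fun τ _ => radNorm_sq _), ← Finset.sum_div, Finset.sum_comm]
  rw [swap, Finset.sum_congr rfl (fun ε _ => main ε), Finset.sum_const, Finset.card_univ,
    Fintype.card_fun, Fintype.card_bool, Fintype.card_fin, nsmul_eq_mul]
  push_cast
  have final : ∑ τ : Fin K → ZMod 2, ‖∑ k, sg (τ k) • g k‖ ^ 2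
      = ∑ ε : Fin K → Bool, ‖∑ k, if ε k then g k else -g k‖ ^ 2 := by
    refine (Fintype.sum_bijective (fun ε : Fin K → Bool => fun k => eBool (ε k))
      ((Equiv.piCongrRight (fun _ => eBool)).bijective) _ _ (fun ε => ?_)).symm
    congr 1
    refine congrArg _ (Finset.sum_congr rfl (fun k _ => ?_))
    rw [ite_eq_bb_smul, sg_eBool]
  have hL : ((2:ℝ)^L) ≠ 0 := by positivity
  have hK : ((2:ℝ)^K) ≠ 0 := by positivity
  rw [final, radNorm_sq]
  field_simp

end RadNorm

/-- pushing one admissible completed family of distinct tuples below `RMconstDistinct`. -/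
lemma ofReal_le_RMconstDistinct {n : ℕ} {Z : Fin (n + 1) → Type*}
    [∀ j, NormedAddCommGroup (Z j)] [∀ j, NormedSpace ℂ (Z j)]
    (ϖ : (∀ j, Z j) → ℂ) (J : Finset (Fin (n + 1))) (v : Fin (n + 1))
    (A : Set (∀ j ∈ J, Z j)) {L : ℕ} (e' : ∀ j ∈ J, Fin L → Z j)
    (hA : ∀ k : Fin L, (fun j hj => e' j hj k) ∈ A)
    (hinj : Function.Injective fun k : Fin L => (fun j hj => e' j hj k : ∀ j ∈ J, Z j))
    (g' : ∀ j, Fin L → Z j)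
    (hcond : (∀ j (hj : j ∈ J), g' j = e' j hj) ∧
      (∃ gvv : Z v, (∀ k, g' v k = gvv) ∧ ‖gvv‖ ≤ 1) ∧
      (∀ j, j ∉ J → j ≠ v → radNorm (g' j) ≤ 1)) :
    ENNReal.ofReal ‖∑ k, ϖ fun j => g' j k‖ ≤ RMconstDistinct ϖ J v A := by
  have h1 : ENNReal.ofReal ‖∑ k, ϖ fun j => g' j k‖ ≤ RMfam ϖ J v e' := by
    rw [RMfam]
    exact le_iSup_of_le g' (le_iSup_of_le hcond le_rfl)
  refine le_trans h1 ?_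
  rw [RMconstDistinct]
  exact le_iSup_of_le L (le_iSup_of_le e' (le_iSup_of_le ⟨hA, hinj⟩ le_rfl))

set_option maxHeartbeats 1600000 in
/-- the RM constant of a set of tuples equals its distinct-tuples variant. -/
theorem RMconstDistinct_eq_RMconst {n : ℕ} (hn : 3 ≤ n)
    (Z : Fin (n + 1) → Type u) [∀ j, NormedAddCommGroup (Z j)] [∀ j, NormedSpace ℂ (Z j)]
    (ϖ : (∀ j, Z j) → ℂ) (hϖ : IsContraction ϖ)
    (J : Finset (Fin (n + 1))) (hJ1 : 1 ≤ J.card) (hJ2 : J.card ≤ n - 2)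
    (v : Fin (n + 1)) (hv : v ∉ J)
    (A : Set (∀ j ∈ J, Z j)) :
    RMconstDistinct ϖ J v A = RMconst ϖ J v A := by
  classical
  obtain ⟨⟨Λ, hΛ⟩, -⟩ := hϖ
  subst hΛ
  refine le_antisymm ?_ ?_
  · refine iSup_le fun K => iSup_le fun e => iSup_le fun hc => ?_
    exact le_iSup_of_le K (le_iSup_of_le e (le_iSup_of_le hc.1 le_rfl))
  · refine iSup_le fun K => iSup_le fun e => iSup_le fun he => ?_
    refine iSup_le fun g => iSup_le fun hg => ?_
    obtain ⟨hgJ, ⟨gv, hgv, hgv1⟩, hgrad⟩ := hg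
    by_cases htop : RMconstDistinct (⇑Λ) J v A = ⊤
    · rw [htop]; exact le_top
    set R : ℝ := (RMconstDistinct (⇑Λ) J v A).toReal with hR
    -- the free slots
    set F : Finset (Fin (n+1)) := Finset.univ.filter (fun j => j ∉ J ∧ j ≠ v) with hF
    have hmemF : ∀ j, j ∈ F ↔ (j ∉ J ∧ j ≠ v) := by
      intro j; simp [hF]
    have hvF : v ∉ F := fun hc => ((hmemF v).mp hc).2 rfl
    have hFcard : 2 ≤ F.card := by
      have h1 : F = Finset.univ \ insert v J := by
        ext j
        simp only [hF, Finset.mem_filter, Finset.mem_univ, true_and, Finset.mem_sdiff,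
          Finset.mem_insert, not_or]
        tauto
      rw [h1, Finset.card_sdiff_of_subset (Finset.subset_univ _), Finset.card_insert_of_notMem hv,
        Finset.card_univ, Fintype.card_fin]
      omega
    obtain ⟨μ, hμF, ν, hνF, hμν⟩ := Finset.one_lt_card.mp (by omega : 1 < F.card)
    set F' : Finset (Fin (n+1)) := F.erase μ with hF'
    have hνF' : ν ∈ F' := Finset.mem_erase.mpr ⟨Ne.symm hμν, hνF⟩
    have hμF' : μ ∉ F' := Finset.notMem_erase _ _
    have hins : insert μ F' = F := Finset.insert_erase hμF
    have hμJ : μ ∉ J := ((hmemF μ).mp hμF).1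
    have hμv : μ ≠ v := ((hmemF μ).mp hμF).2
    have hF'F : F' ⊆ F := Finset.erase_subset _ _
    -- deduplication of the tuples
    set tup : Fin K → (∀ j ∈ J, Z j) := fun k => fun j hj => e j hj k with htup
    set s : Finset (∀ j ∈ J, Z j) := Finset.univ.image tup with hs
    set L : ℕ := s.card with hLdef
    set q : {x // x ∈ s} ≃ Fin L := s.equivFin with hq
    set a : Fin L → (∀ j ∈ J, Z j) := fun l => (q.symm l : {x // x ∈ s}).1 with ha
    have hmem_s : ∀ k, tup k ∈ s := fun k => Finset.mem_image_of_mem _ (Finset.mem_univ k)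
    set cIdx : Fin K → Fin L := fun k => q ⟨tup k, hmem_s k⟩ with hcIdx
    have ha_c : ∀ k, a (cIdx k) = tup k := by
      intro k
      simp only [ha, hcIdx, Equiv.symm_apply_apply]
    have ha_inj : Function.Injective a := by
      intro l₁ l₂ h
      exact q.symm.injective (Subtype.ext h)
    have ha_mem : ∀ l, a l ∈ A := by
      intro l
      have h2 : a l ∈ s := (q.symm l).2
      rw [hs] at h2
      obtain ⟨k, -, hk⟩ := Finset.mem_image.mp h2
      rw [← hk]; exact he k
    have hsurj : ∀ l, ∃ k, cIdx k = l := by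
      intro l
      have h2 : a l ∈ s := (q.symm l).2
      rw [hs] at h2
      obtain ⟨k, -, hk⟩ := Finset.mem_image.mp h2
      refine ⟨k, ?_⟩
      have h3 : (⟨tup k, hmem_s k⟩ : {x // x ∈ s}) = q.symm l := Subtype.ext hk
      simp only [hcIdx, h3, Equiv.apply_symm_apply]
    set k0 : Fin L → Fin K := fun l => (hsurj l).choose with hk0
    have hk0c : ∀ l, cIdx (k0 l) = l := fun l => (hsurj l).choose_spec
    set e' : ∀ j ∈ J, Fin L → Z j := fun j hj l => a l j hj with he'
    set fib : Fin L → Finset (Fin K) := fun l => Finset.univ.filter (fun k => cIdx k = l)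
      with hfib
    -- the randomization
    set ς : (Fin (n+1) → Fin K → ZMod 2) → Fin (n+1) → Fin K → ZMod 2 :=
      fun σ j k => if j = μ then ∑ j' ∈ F', σ j' k else σ j k with hς
    set hh : (Fin (n+1) → Fin K → ZMod 2) → ∀ j, Fin L → Z j :=
      fun σ j l => ∑ k ∈ fib l, sg (ς σ j k) • g j k with hhh
    set GG : (Fin (n+1) → Fin K → ZMod 2) → Fin L → ∀ j, Z j :=
      fun σ l j => if hj : j ∈ J then e' j hj l else if j ∈ F then hh σ j l
        else g j (k0 l) with hGG
    set T : (Fin (n+1) → Fin K → ZMod 2) → ℂ := fun σ => ∑ l, Λ (GG σ l) with hT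
    set AA : Fin L → Fin (n+1) → Finset (Fin K) :=
      fun l j => if j ∈ F then fib l else {k0 l} with hAA
    set ww : (Fin (n+1) → Fin K → ZMod 2) → Fin L → ∀ j, Fin K → Z j :=
      fun σ l j k => if hj : j ∈ J then e' j hj l else if j ∈ F then sg (ς σ j k) • g j k
        else g j (k0 l) with hww
    set uu : Fin L → ∀ j, Fin K → Z j :=
      fun l j k => if hj : j ∈ J then e' j hj l else if j ∈ F then g j k
        else g j (k0 l) with huu
    set cc : (Fin (n+1) → Fin K → ZMod 2) → Fin (n+1) → Fin K → ℂ :=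
      fun σ j k => if j ∈ F then sg (ς σ j k) else 1 with hcc
    -- expansion of each randomized term
    have hGGl : ∀ σ l, GG σ l = fun j => ∑ k ∈ AA l j, ww σ l j k := by
      intro σ l; funext j
      by_cases hj : j ∈ J
      · have hjF : j ∉ F := fun hc => ((hmemF j).mp hc).1 hj
        simp [hGG, hAA, hww, hj, hjF]
      · by_cases hjF : j ∈ F
        · simp [hGG, hAA, hww, hhh, hj, hjF]
        · simp [hGG, hAA, hww, hj, hjF]
    have hwcu : ∀ σ l j k, ww σ l j k = cc σ j k • uu l j k := by
      intro σ l j k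
      by_cases hj : j ∈ J
      · have hjF : j ∉ F := fun hc => ((hmemF j).mp hc).1 hj
        simp [hww, hcc, huu, hj, hjF]
      · by_cases hjF : j ∈ F
        · simp [hww, hcc, huu, hj, hjF]
        · simp [hww, hcc, huu, hj, hjF]
    have hexp : ∀ σ l, Λ (GG σ l)
        = ∑ r ∈ Fintype.piFinset (AA l), (∏ j, cc σ j (r j)) • Λ (fun j => uu l j (r j)) := by
      intro σ l
      rw [hGGl σ l]
      rw [Λ.map_sum_finset (fun j k => ww σ l j k) (AA l)]
      refine Finset.sum_congr rfl fun r _ => ?_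
      have h4 : (fun j => ww σ l j (r j)) = fun j => cc σ j (r j) • uu l j (r j) :=
        funext fun j => hwcu σ l j (r j)
      rw [h4, Λ.map_smul_univ]
    -- the coefficient after averaging
    have hcoef : ∀ (r : Fin (n+1) → Fin K),
        (∑ σ : Fin (n+1) → Fin K → ZMod 2, ∏ j, cc σ j (r j))
          = if ∀ j ∈ F', r j = r μ then ((2:ℂ)^K)^(n+1) else 0 := by
      intro r
      have step : ∀ σ : Fin (n+1) → Fin K → ZMod 2,
          ∏ j, cc σ j (r j) = ∏ j, (if j ∈ F' then sg (σ j (r j) + σ j (r μ)) else 1) := by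
        intro σ
        have l1 : ∏ j, cc σ j (r j) = ∏ j ∈ F, sg (ς σ j (r j)) := by
          simp only [hcc]
          rw [Finset.prod_ite_mem, Finset.univ_inter]
        have l2 : ∏ j ∈ F, sg (ς σ j (r j))
            = (∏ j ∈ F', sg (σ j (r μ))) * ∏ j ∈ F', sg (σ j (r j)) := by
          rw [← hins, Finset.prod_insert hμF']
          congr 1
          · simp only [hς, if_pos rfl]
            exact sg_sum F' (fun j' => σ j' (r μ))
          · refine Finset.prod_congr rfl fun j hj => ?_
            simp only [hς, if_neg (Finset.mem_erase.mp hj).1]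
        have l3 : (∏ j ∈ F', sg (σ j (r μ))) * ∏ j ∈ F', sg (σ j (r j))
            = ∏ j ∈ F', sg (σ j (r j) + σ j (r μ)) := by
          rw [← Finset.prod_mul_distrib]
          refine Finset.prod_congr rfl fun j _ => ?_
          rw [sg_add, mul_comm]
        have l4 : ∏ j, (if j ∈ F' then sg (σ j (r j) + σ j (r μ)) else 1)
            = ∏ j ∈ F', sg (σ j (r j) + σ j (r μ)) := by
          rw [Finset.prod_ite_mem, Finset.univ_inter]
        rw [l1, l2, l3, l4]
      rw [Finset.sum_congr rfl (fun σ _ => step σ),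
        sum_pi_prod (β := Fin K → ZMod 2)
          (f := fun j τ => if j ∈ F' then sg (τ (r j) + τ (r μ)) else 1)]
      have l5 : ∀ j, (∑ τ : Fin K → ZMod 2, if j ∈ F' then sg (τ (r j) + τ (r μ)) else 1)
          = if j ∈ F' then (if r j = r μ then ((2:ℂ)^K) else 0) else (2:ℂ)^K := by
        intro j
        by_cases hj : j ∈ F'
        · simp only [if_pos hj]; exact sum_sg_pair (r j) (r μ)
        · simp only [if_neg hj]
          rw [Finset.sum_const, Finset.card_univ, Fintype.card_fun, ZMod.card, Fintype.card_fin]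
          simp
      rw [Finset.prod_congr rfl (fun j _ => l5 j)]
      by_cases hcond : ∀ j ∈ F', r j = r μ
      · rw [if_pos hcond]
        have l6 : ∀ j : Fin (n+1),
            (if j ∈ F' then (if r j = r μ then ((2:ℂ)^K) else 0) else (2:ℂ)^K) = (2:ℂ)^K := by
          intro j
          by_cases hj : j ∈ F'
          · simp [hj, hcond j hj]
          · simp [hj]
        rw [Finset.prod_congr rfl (fun j _ => l6 j), Finset.prod_const, Finset.card_univ,
          Fintype.card_fin]
      · rw [if_neg hcond]
        push_neg at hcond
        obtain ⟨j, hj, hne⟩ := hcond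
        exact Finset.prod_eq_zero (Finset.mem_univ j) (by simp [hj, hne])
    -- evaluating the inner sum
    have hinner : ∀ l,
        (∑ r ∈ Fintype.piFinset (AA l),
          (if ∀ j ∈ F', r j = r μ then ((2:ℂ)^K)^(n+1) else 0) • Λ (fun j => uu l j (r j)))
        = ((2:ℂ)^K)^(n+1) • ∑ k ∈ fib l, Λ (fun j => g j k) := by
      intro l
      have h1 : ∀ r, r ∈ Fintype.piFinset (AA l) →
          (if ∀ j ∈ F', r j = r μ then ((2:ℂ)^K)^(n+1) else 0) • Λ (fun j => uu l j (r j))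
          = if ∀ j ∈ F', r j = r μ then ((2:ℂ)^K)^(n+1) • Λ (fun j => uu l j (r j)) else 0 := by
        intro r _
        by_cases hcnd : ∀ j ∈ F', r j = r μ <;> simp [hcnd]
      rw [Finset.sum_congr rfl h1, ← Finset.sum_filter, Finset.smul_sum]
      have hrmem : ∀ r ∈ (Fintype.piFinset (AA l)).filter (fun r => ∀ j ∈ F', r j = r μ),
          r μ ∈ fib l ∧ cIdx (r μ) = l := by
        intro r hr
        rw [Finset.mem_filter] at hr
        have h2 := (Fintype.mem_piFinset.mp hr.1) μ
        simp only [hAA, if_pos hμF] at h2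
        refine ⟨h2, ?_⟩
        simp only [hfib, Finset.mem_filter] at h2
        exact h2.2
      refine Finset.sum_nbij' (i := fun r => r μ)
        (j := fun k => fun j => if j ∈ F then k else k0 l) ?_ ?_ ?_ ?_ ?_
      · intro r hr
        exact (hrmem r hr).1
      · intro k hk
        rw [Finset.mem_filter]
        constructor
        · rw [Fintype.mem_piFinset]
          intro j
          by_cases hj : j ∈ F
          · simp only [hAA, if_pos hj]
            exact hk
          · simp only [hAA, if_neg hj]
            exact Finset.mem_singleton_self _
        · intro j hj
          have hjF : j ∈ F := hF'F hj
          simp [hjF, hμF]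
      · intro r hr
        funext j
        by_cases hj : j ∈ F
        · simp only [if_pos hj]
          rcases Finset.mem_insert.mp (hins ▸ hj) with h | h
          · rw [h]
          · rw [Finset.mem_filter] at hr
            exact (hr.2 j h).symm
        · simp only [if_neg hj]
          rw [Finset.mem_filter] at hr
          have h2 := (Fintype.mem_piFinset.mp hr.1) j
          simp only [hAA, if_neg hj] at h2
          exact (Finset.mem_singleton.mp h2).symm
      · intro k hk
        simp [hμF]
      · intro r hr
        have hcl : cIdx (r μ) = l := (hrmem r hr).2
        have hval : (fun j => uu l j (r j)) = fun j => g j (r μ) := by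
          funext j
          by_cases hj : j ∈ J
          · simp only [huu, dif_pos hj, he']
            rw [← hcl, ha_c]
            simp only [htup]
            rw [hgJ j hj]
          · by_cases hjF : j ∈ F
            · simp only [huu, dif_neg hj, if_pos hjF]
              have hrj : r j = r μ := by
                rcases Finset.mem_insert.mp (hins ▸ hjF) with h | h
                · rw [h]
                · rw [Finset.mem_filter] at hr
                  exact hr.2 j h
              rw [hrj]
            · have hjv : j = v := by
                by_contra hne
                exact hjF ((hmemF j).mpr ⟨hj, hne⟩)
              subst hjv
              simp only [huu, dif_neg hj, if_neg hjF]
              rw [hgv (k0 l), hgv (r μ)]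
        rw [hval]
    -- the main identity
    have identity : (∑ σ : Fin (n+1) → Fin K → ZMod 2, T σ)
        = ((2:ℂ)^K)^(n+1) * ∑ k, Λ (fun j => g j k) := by
      have h1 : (∑ σ : Fin (n+1) → Fin K → ZMod 2, T σ)
          = ∑ l, ∑ r ∈ Fintype.piFinset (AA l),
              (∑ σ : Fin (n+1) → Fin K → ZMod 2, ∏ j, cc σ j (r j)) • Λ (fun j => uu l j (r j)) := by
        simp only [hT]
        rw [Finset.sum_comm]
        refine Finset.sum_congr rfl fun l _ => ?_
        rw [Finset.sum_congr rfl fun σ _ => hexp σ l, Finset.sum_comm]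
        refine Finset.sum_congr rfl fun r _ => ?_
        rw [Finset.sum_smul]
      rw [h1]
      have h2 : ∀ l, (∑ r ∈ Fintype.piFinset (AA l),
          (∑ σ : Fin (n+1) → Fin K → ZMod 2, ∏ j, cc σ j (r j)) • Λ (fun j => uu l j (r j)))
          = ((2:ℂ)^K)^(n+1) • ∑ k ∈ fib l, Λ (fun j => g j k) := by
        intro l
        rw [Finset.sum_congr rfl fun r _ => by rw [hcoef r]]
        exact hinner l
      rw [Finset.sum_congr rfl fun l _ => h2 l, ← Finset.smul_sum, smul_eq_mul]
      congr 1
      simp only [hfib]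
      exact Finset.sum_fiberwise _ _ _
    -- per-sign bound via the distinct constant
    have bound2 : ∀ σ, ‖T σ‖ ≤ (∏ j ∈ F, radNorm (hh σ j)) * R := by
      intro σ
      have hprodnn : (0:ℝ) ≤ ∏ j ∈ F, radNorm (hh σ j) :=
        Finset.prod_nonneg fun j _ => radNorm_nonneg _
      by_cases hzero : ∃ j ∈ F, radNorm (hh σ j) = 0
      · obtain ⟨j, hjF, hj0⟩ := hzero
        have hz : ∀ l, hh σ j l = 0 := eq_zero_of_radNorm_eq_zero hj0
        have hT0 : T σ = 0 := by
          simp only [hT]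
          refine Finset.sum_eq_zero fun l _ => ?_
          refine Λ.map_coord_zero j ?_
          have hjJ := ((hmemF j).mp hjF).1
          simp only [hGG, dif_neg hjJ, if_pos hjF]
          exact hz l
        rw [hT0, norm_zero]
        exact mul_nonneg hprodnn ENNReal.toReal_nonneg
      · push_neg at hzero
        have hpos : ∀ j ∈ F, 0 < radNorm (hh σ j) :=
          fun j hj => lt_of_le_of_ne (radNorm_nonneg _) (Ne.symm (hzero j hj))
        set g' : ∀ j, Fin L → Z j := fun j l => if hj : j ∈ J then e' j hj l
          else if j ∈ F then (((radNorm (hh σ j))⁻¹ : ℝ) : ℂ) • hh σ j l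
          else g j (k0 l) with hg'
        have hcondJ : ∀ j (hj : j ∈ J), g' j = e' j hj := by
          intro j hj
          funext l
          have hjF : j ∉ F := fun hc => ((hmemF j).mp hc).1 hj
          simp [hg', hj]
        have hcondv : ∀ l, g' v l = gv := by
          intro l
          simp only [hg', dif_neg hv, if_neg hvF]
          exact hgv (k0 l)
        have hcondrad : ∀ j, j ∉ J → j ≠ v → radNorm (g' j) ≤ 1 := by
          intro j hjJ hjv
          have hjF : j ∈ F := (hmemF j).mpr ⟨hjJ, hjv⟩
          have h4 : g' j = fun l => (((radNorm (hh σ j))⁻¹ : ℝ) : ℂ) • hh σ j l :=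
            funext fun l => by simp [hg', hjJ, hjF]
          rw [h4, radNorm_smul, Complex.norm_real, Real.norm_eq_abs, abs_inv,
            abs_of_pos (hpos j hjF)]
          exact le_of_eq (inv_mul_cancel₀ (hzero j hjF))
        have hRM : ENNReal.ofReal ‖∑ l, Λ (fun j => g' j l)‖ ≤ RMconstDistinct (⇑Λ) J v A := by
          refine ofReal_le_RMconstDistinct (⇑Λ) J v A e' (fun l => ha_mem l)
            (fun l₁ l₂ hl => ha_inj hl) g' ⟨hcondJ, ⟨gv, hcondv, hgv1⟩, hcondrad⟩
        have hnorm : ‖∑ l, Λ (fun j => g' j l)‖ ≤ R :=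
          (ENNReal.ofReal_le_iff_le_toReal htop).mp hRM
        have hfact : T σ = (((∏ j ∈ F, radNorm (hh σ j)) : ℝ) : ℂ) * ∑ l, Λ (fun j => g' j l) := by
          simp only [hT]
          rw [Finset.mul_sum]
          refine Finset.sum_congr rfl fun l _ => ?_
          have h5 : GG σ l = fun j => (if j ∈ F then (((radNorm (hh σ j)) : ℝ) : ℂ) else 1) • g' j l := by
            funext j
            by_cases hjJ : j ∈ J
            · have hjF : j ∉ F := fun hc => ((hmemF j).mp hc).1 hjJ
              simp [hGG, hg', hjJ, hjF]
            · by_cases hjF : j ∈ F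
              · simp only [hGG, hg', dif_neg hjJ, if_pos hjF, smul_smul]
                rw [← Complex.ofReal_mul, mul_inv_cancel₀ (hzero j hjF)]
                simp
              · simp [hGG, hg', hjJ, hjF]
          rw [h5, Λ.map_smul_univ, Finset.prod_ite_mem, Finset.univ_inter, smul_eq_mul]
          congr 1
          rw [Complex.ofReal_prod]
        rw [hfact, norm_mul, Complex.norm_real, Real.norm_eq_abs, abs_of_nonneg hprodnn]
        exact mul_le_mul_of_nonneg_left hnorm hprodnn
    -- second-moment bound for the random radNorms
    have hrad_le : ∀ j, j ∈ F → radNorm (g j) ≤ 1 := by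
      intro j hj
      exact hgrad j ((hmemF j).mp hj).1 ((hmemF j).mp hj).2
    have moment : ∀ (j : Fin (n+1)), j ∈ F →
        (∑ τ : Fin K → ZMod 2, radNorm (fun l => ∑ k ∈ fib l, sg (τ k) • g j k) ^ 2)
          ≤ (2:ℝ)^K := by
      intro j hj
      have h1 := sum_radNorm_shift_sq (c := cIdx) (g := g j)
      simp only [hfib]
      rw [h1]
      have h2 : radNorm (g j) ^ 2 ≤ 1 := by
        have h3 := hrad_le j hj
        nlinarith [radNorm_nonneg (g j)]
      nlinarith [pow_pos (by norm_num : (0:ℝ) < 2) K]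
    have bound3 : (∑ σ : Fin (n+1) → Fin K → ZMod 2, ∏ j ∈ F, radNorm (hh σ j))
        ≤ ((2:ℝ)^K)^(n+1) := by
      have hsplit : ∀ σ, ∏ j ∈ F, radNorm (hh σ j)
          = radNorm (hh σ μ) * ∏ j ∈ F', radNorm (hh σ j) := by
        intro σ; rw [← hins, Finset.prod_insert hμF']
      -- first factor: change of variables
      have hμsum : (∑ σ : Fin (n+1) → Fin K → ZMod 2, radNorm (hh σ μ) ^ 2)
          ≤ ((2:ℝ)^K)^(n+1) := by
        set sh : (Fin (n+1) → Fin K → ZMod 2) → Fin K → ZMod 2 :=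
          fun σ k => ∑ j ∈ F'.erase ν, σ j k with hsh
        set Ψ : (Fin (n+1) → Fin K → ZMod 2) → (Fin (n+1) → Fin K → ZMod 2) :=
          fun σ => Function.update σ ν (fun k => σ ν k + sh σ k) with hΨ
        have hΨν : ∀ σ, Ψ σ ν = fun k => σ ν k + sh σ k := fun σ => Function.update_self _ _ _
        have hΨj : ∀ σ j, j ≠ ν → Ψ σ j = σ j := fun σ j hj => Function.update_of_ne hj _ _
        have hshΨ : ∀ σ, sh (Ψ σ) = sh σ := by
          intro σ; funext k
          simp only [hsh]
          refine Finset.sum_congr rfl fun j hj => ?_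
          rw [hΨj σ j (Finset.mem_erase.mp hj).1]
        have hinv : Function.Involutive Ψ := by
          intro σ; funext j k
          by_cases hj : j = ν
          · rw [hj]
            have h1 : Ψ (Ψ σ) ν = fun k => Ψ σ ν k + sh (Ψ σ) k := hΨν (Ψ σ)
            rw [h1, hshΨ σ, hΨν σ]
            simp [add_assoc, zmod2_add_self]
          · rw [hΨj _ _ hj, hΨj _ _ hj]
        have hςΨ : ∀ σ k, ς (Ψ σ) μ k = σ ν k := by
          intro σ k
          simp only [hς, if_pos rfl]
          rw [← Finset.add_sum_erase _ _ hνF']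
          have h1 : Ψ σ ν k = σ ν k + sh σ k := by rw [hΨν σ]
          have h2 : ∑ j ∈ F'.erase ν, Ψ σ j k = sh σ k := by
            simp only [hsh]
            refine Finset.sum_congr rfl fun j hj => ?_
            rw [hΨj σ j (Finset.mem_erase.mp hj).1]
          rw [h1, h2, add_assoc, zmod2_add_self, add_zero]
        have h0 : ∀ σ, radNorm (hh (Ψ σ) μ) ^ 2
            = radNorm (fun l => ∑ k ∈ fib l, sg (σ ν k) • g μ k) ^ 2 := by
          intro σ
          congr 2
          simp only [hhh]
          exact funext fun l => Finset.sum_congr rfl fun k _ => by rw [hςΨ σ k]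
        have hchg : (∑ σ : Fin (n+1) → Fin K → ZMod 2, radNorm (hh σ μ) ^ 2)
            = ∑ σ : Fin (n+1) → Fin K → ZMod 2,
                radNorm (fun l => ∑ k ∈ fib l, sg (σ ν k) • g μ k) ^ 2 := by
          calc (∑ σ : Fin (n+1) → Fin K → ZMod 2, radNorm (hh σ μ) ^ 2)
              = ∑ σ : Fin (n+1) → Fin K → ZMod 2, radNorm (hh (Ψ σ) μ) ^ 2 :=
                (Fintype.sum_bijective Ψ hinv.bijective _ _ (fun σ => rfl)).symm
            _ = _ := Finset.sum_congr rfl fun σ _ => h0 σ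
        rw [hchg,
          sum_pi_marginal (β := Fin K → ZMod 2) ν
            (fun τ => radNorm (fun l => ∑ k ∈ fib l, sg (τ k) • g μ k) ^ 2)]
        have h3 := moment μ hμF
        have hcard : ((Fintype.card (Fin K → ZMod 2) : ℝ)) = (2:ℝ)^K := by
          rw [Fintype.card_fun, ZMod.card, Fintype.card_fin]
          push_cast
          ring
        rw [hcard, Fintype.card_fin]
        have h4 : ((2:ℝ)^K)^(n+1-1) = ((2:ℝ)^K)^n := by norm_num
        rw [h4]
        calc ((2:ℝ)^K)^n * (∑ τ : Fin K → ZMod 2,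
              radNorm (fun l => ∑ k ∈ fib l, sg (τ k) • g μ k) ^ 2)
            ≤ ((2:ℝ)^K)^n * (2:ℝ)^K :=
              mul_le_mul_of_nonneg_left h3 (by positivity)
          _ = ((2:ℝ)^K)^(n+1) := by rw [pow_succ]
      -- second factor: independence
      have hF'sum : (∑ σ : Fin (n+1) → Fin K → ZMod 2, (∏ j ∈ F', radNorm (hh σ j)) ^ 2)
          ≤ ((2:ℝ)^K)^(n+1) := by
        have h1 : ∀ σ : Fin (n+1) → Fin K → ZMod 2, (∏ j ∈ F', radNorm (hh σ j)) ^ 2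
            = ∏ j, (if j ∈ F' then
                radNorm (fun l => ∑ k ∈ fib l, sg (σ j k) • g j k) ^ 2 else 1) := by
          intro σ
          rw [Finset.prod_ite_mem, Finset.univ_inter, ← Finset.prod_pow]
          refine Finset.prod_congr rfl fun j hj => ?_
          congr 2
          simp only [hhh]
          refine funext fun l => Finset.sum_congr rfl fun k _ => ?_
          have hjμ : j ≠ μ := (Finset.mem_erase.mp hj).1
          simp only [hς, if_neg hjμ]
        rw [Finset.sum_congr rfl fun σ _ => h1 σ,
          sum_pi_prod (β := Fin K → ZMod 2) (f := fun j τ => if j ∈ F' then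
            radNorm (fun l => ∑ k ∈ fib l, sg (τ k) • g j k) ^ 2 else 1)]
        have h2 : ∀ j : Fin (n+1), (∑ τ : Fin K → ZMod 2,
            if j ∈ F' then radNorm (fun l => ∑ k ∈ fib l, sg (τ k) • g j k) ^ 2 else 1)
            ≤ (2:ℝ)^K := by
          intro j
          by_cases hj : j ∈ F'
          · simp only [if_pos hj]
            exact moment j (hF'F hj)
          · simp only [if_neg hj]
            rw [Finset.sum_const, Finset.card_univ, Fintype.card_fun, ZMod.card,
              Fintype.card_fin, nsmul_eq_mul, mul_one]
            push_cast
            exact le_refl _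
        calc (∏ j, ∑ τ : Fin K → ZMod 2,
              if j ∈ F' then radNorm (fun l => ∑ k ∈ fib l, sg (τ k) • g j k) ^ 2 else 1)
            ≤ ∏ _j : Fin (n+1), (2:ℝ)^K := by
              refine Finset.prod_le_prod (fun j _ => ?_) (fun j _ => h2 j)
              by_cases hj : j ∈ F'
              · simp only [if_pos hj]
                exact Finset.sum_nonneg fun τ _ => sq_nonneg _
              · simp only [if_neg hj]
                exact Finset.sum_nonneg fun τ _ => zero_le_one
          _ = ((2:ℝ)^K)^(n+1) := by
              rw [Finset.prod_const, Finset.card_univ, Fintype.card_fin]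
      -- Cauchy-Schwarz
      have hCS := Finset.sum_mul_sq_le_sq_mul_sq Finset.univ
        (fun σ : Fin (n+1) → Fin K → ZMod 2 => radNorm (hh σ μ))
        (fun σ : Fin (n+1) → Fin K → ZMod 2 => ∏ j ∈ F', radNorm (hh σ j))
      have hXnn : (0:ℝ) ≤ ∑ σ : Fin (n+1) → Fin K → ZMod 2, ∏ j ∈ F, radNorm (hh σ j) :=
        Finset.sum_nonneg fun σ _ => Finset.prod_nonneg fun j _ => radNorm_nonneg _
      have hBnn : (0:ℝ) ≤ ((2:ℝ)^K)^(n+1) := by positivity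
      have hsq : (∑ σ : Fin (n+1) → Fin K → ZMod 2, ∏ j ∈ F, radNorm (hh σ j)) ^ 2
          ≤ (((2:ℝ)^K)^(n+1)) ^ 2 := by
        rw [Finset.sum_congr rfl fun σ _ => hsplit σ]
        calc (∑ σ : Fin (n+1) → Fin K → ZMod 2,
              radNorm (hh σ μ) * ∏ j ∈ F', radNorm (hh σ j)) ^ 2
            ≤ (∑ σ : Fin (n+1) → Fin K → ZMod 2, radNorm (hh σ μ) ^ 2) *
              (∑ σ : Fin (n+1) → Fin K → ZMod 2, (∏ j ∈ F', radNorm (hh σ j)) ^ 2) := hCS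
          _ ≤ (((2:ℝ)^K)^(n+1)) ^ 2 := by
              rw [sq]
              refine mul_le_mul hμsum hF'sum ?_ hBnn
              exact Finset.sum_nonneg fun σ _ => sq_nonneg _
      calc (∑ σ : Fin (n+1) → Fin K → ZMod 2, ∏ j ∈ F, radNorm (hh σ j))
          = Real.sqrt ((∑ σ : Fin (n+1) → Fin K → ZMod 2, ∏ j ∈ F, radNorm (hh σ j)) ^ 2) :=
            (Real.sqrt_sq hXnn).symm
        _ ≤ Real.sqrt ((((2:ℝ)^K)^(n+1)) ^ 2) := Real.sqrt_le_sqrt hsq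
        _ = ((2:ℝ)^K)^(n+1) := Real.sqrt_sq hBnn
    -- conclusion
    have hBpos : (0:ℝ) < ((2:ℝ)^K)^(n+1) := by positivity
    have hnormS : ‖∑ k, Λ (fun j => g j k)‖ ≤ R := by
      have h1 : (((2:ℝ)^K)^(n+1)) * ‖∑ k, Λ (fun j => g j k)‖
          = ‖∑ σ : Fin (n+1) → Fin K → ZMod 2, T σ‖ := by
        rw [identity, norm_mul]
        congr 1
        rw [show ((2:ℂ)^K)^(n+1) = ((((2:ℝ)^K)^(n+1) : ℝ) : ℂ) by push_cast; ring]
        rw [Complex.norm_real, Real.norm_eq_abs, abs_of_pos hBpos]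
      have h2 : ‖∑ σ : Fin (n+1) → Fin K → ZMod 2, T σ‖
          ≤ ∑ σ : Fin (n+1) → Fin K → ZMod 2, ‖T σ‖ := norm_sum_le _ _
      have h3 : (∑ σ : Fin (n+1) → Fin K → ZMod 2, ‖T σ‖)
          ≤ ∑ σ : Fin (n+1) → Fin K → ZMod 2, (∏ j ∈ F, radNorm (hh σ j)) * R :=
        Finset.sum_le_sum fun σ _ => bound2 σ
      have h4 : (∑ σ : Fin (n+1) → Fin K → ZMod 2, (∏ j ∈ F, radNorm (hh σ j)) * R)
          = (∑ σ : Fin (n+1) → Fin K → ZMod 2, ∏ j ∈ F, radNorm (hh σ j)) * R :=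
        (Finset.sum_mul _ _ _).symm
      have h5 : (∑ σ : Fin (n+1) → Fin K → ZMod 2, ∏ j ∈ F, radNorm (hh σ j)) * R
          ≤ ((2:ℝ)^K)^(n+1) * R :=
        mul_le_mul_of_nonneg_right bound3 ENNReal.toReal_nonneg
      have h6 : (((2:ℝ)^K)^(n+1)) * ‖∑ k, Λ (fun j => g j k)‖ ≤ ((2:ℝ)^K)^(n+1) * R := by
        rw [h1]
        calc ‖∑ σ : Fin (n+1) → Fin K → ZMod 2, T σ‖
            ≤ ∑ σ : Fin (n+1) → Fin K → ZMod 2, ‖T σ‖ := h2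
          _ ≤ _ := h3
          _ = _ := h4
          _ ≤ _ := h5
      exact le_of_mul_le_mul_left h6 hBpos
    calc ENNReal.ofReal ‖∑ k, Λ fun j => g j k‖ ≤ ENNReal.ofReal R :=
          ENNReal.ofReal_le_ofReal hnormS
      _ = RMconstDistinct (⇑Λ) J v A := ENNReal.ofReal_toReal htop

end OVM
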